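/- Let S = (ℤ/2)[y2, y3, y12, y16, y20] be the polynomial ring over the field with two elements in five variables, and let J ⊆ S be the ideal generated by the twelve elements: y3^3; y16·y2 + y12·y3^2 + y2^6·y3^2; y16·y3; y12^2·y2 + y12·y2^4·y3^2 + y20·y3^2; y12^2·y3; y12·y16 + y2^14 + y12·y2^5·y3^2 + y2^11·y3^2; y12^3 + y16·y20 + y2^5·y20·y3^2; y12^2·y16 + y20^2 + y12·y2^11·y3^2; y12^2·y20 + y12·y2^13·y3^2 + y12·y2^3·y20·y3^2; y12·y16^2 + y12·y2^13·y3^2; y16^3 + y12·y16·y20 + y12·y2^5·y20·y3^2; y16^2·y20 + y2^13·y20·y3^2. Then all four of the following hold: y2^22·y20 ∈ J, y2^16·y3^4·y20 ∈ J, y2^4·y3^4·y12^2·y20 ∈ J, and y2^6·y12·y20^2 ∈ J. -/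

import Mathlib

open MvPolynomial

/-- `y2`, the degree-2 generator of the mod 2 cohomology ring of EVI. -/
noncomputable def y2 : MvPolynomial (Fin 5) (ZMod 2) := X 0

/-- `y3`, the degree-3 generator of the mod 2 cohomology ring of EVI. -/
noncomputable def y3 : MvPolynomial (Fin 5) (ZMod 2) := X 1

/-- `y12`, the degree-12 generator of the mod 2 cohomology ring of EVI. -/
noncomputable def y12 : MvPolynomial (Fin 5) (ZMod 2) := X 2

/-- `y16`, the degree-16 generator of the mod 2 cohomology ring of EVI. -/
noncomputable def y16 : MvPolynomial (Fin 5) (ZMod 2) := X 3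

/-- `y20`, the degree-20 generator of the mod 2 cohomology ring of EVI. -/
noncomputable def y20 : MvPolynomial (Fin 5) (ZMod 2) := X 4

/-- The ideal of the twelve relations in the mod 2 cohomology ring of EVI (Nakagawa). -/
noncomputable def J : Ideal (MvPolynomial (Fin 5) (ZMod 2)) :=
  Ideal.span
    { y3 ^ 3,
      y16 * y2 + y12 * y3 ^ 2 + y2 ^ 6 * y3 ^ 2,
      y16 * y3,
      y12 ^ 2 * y2 + y12 * y2 ^ 4 * y3 ^ 2 + y20 * y3 ^ 2,
      y12 ^ 2 * y3,
      y12 * y16 + y2 ^ 14 + y12 * y2 ^ 5 * y3 ^ 2 + y2 ^ 11 * y3 ^ 2,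
      y12 ^ 3 + y16 * y20 + y2 ^ 5 * y20 * y3 ^ 2,
      y12 ^ 2 * y16 + y20 ^ 2 + y12 * y2 ^ 11 * y3 ^ 2,
      y12 ^ 2 * y20 + y12 * y2 ^ 13 * y3 ^ 2 + y12 * y2 ^ 3 * y20 * y3 ^ 2,
      y12 * y16 ^ 2 + y12 * y2 ^ 13 * y3 ^ 2,
      y16 ^ 3 + y12 * y16 * y20 + y12 * y2 ^ 5 * y20 * y3 ^ 2,
      y16 ^ 2 * y20 + y2 ^ 13 * y20 * y3 ^ 2 }

set_option maxHeartbeats 4000000 in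
theorem stmt_18 :
    y2 ^ 22 * y20 ∈ J ∧ y2 ^ 16 * y3 ^ 4 * y20 ∈ J ∧
      y2 ^ 4 * y3 ^ 4 * y12 ^ 2 * y20 ∈ J ∧ y2 ^ 6 * y12 * y20 ^ 2 ∈ J := by
  have two0 : (2 : MvPolynomial (Fin 5) (ZMod 2)) = 0 := CharTwo.two_eq_zero
  have hg1 : (y3 ^ 3 : MvPolynomial (Fin 5) (ZMod 2)) ∈ J := Ideal.subset_span (Set.mem_insert _ _)
  have hg2 : (y16 * y2 + y12 * y3 ^ 2 + y2 ^ 6 * y3 ^ 2 : MvPolynomial (Fin 5) (ZMod 2)) ∈ J := Ideal.subset_span (Set.mem_insert_of_mem _ (Set.mem_insert _ _))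
  have hg3 : (y16 * y3 : MvPolynomial (Fin 5) (ZMod 2)) ∈ J := Ideal.subset_span (Set.mem_insert_of_mem _ (Set.mem_insert_of_mem _ (Set.mem_insert _ _)))
  have hg4 : (y12 ^ 2 * y2 + y12 * y2 ^ 4 * y3 ^ 2 + y20 * y3 ^ 2 : MvPolynomial (Fin 5) (ZMod 2)) ∈ J := Ideal.subset_span (Set.mem_insert_of_mem _ (Set.mem_insert_of_mem _ (Set.mem_insert_of_mem _ (Set.mem_insert _ _))))
  have hg5 : (y12 ^ 2 * y3 : MvPolynomial (Fin 5) (ZMod 2)) ∈ J := Ideal.subset_span (Set.mem_insert_of_mem _ (Set.mem_insert_of_mem _ (Set.mem_insert_of_mem _ (Set.mem_insert_of_mem _ (Set.mem_insert _ _)))))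
  have hg6 : (y12 * y16 + y2 ^ 14 + y12 * y2 ^ 5 * y3 ^ 2 + y2 ^ 11 * y3 ^ 2 : MvPolynomial (Fin 5) (ZMod 2)) ∈ J := Ideal.subset_span (Set.mem_insert_of_mem _ (Set.mem_insert_of_mem _ (Set.mem_insert_of_mem _ (Set.mem_insert_of_mem _ (Set.mem_insert_of_mem _ (Set.mem_insert _ _))))))
  have hg7 : (y12 ^ 3 + y16 * y20 + y2 ^ 5 * y20 * y3 ^ 2 : MvPolynomial (Fin 5) (ZMod 2)) ∈ J := Ideal.subset_span (Set.mem_insert_of_mem _ (Set.mem_insert_of_mem _ (Set.mem_insert_of_mem _ (Set.mem_insert_of_mem _ (Set.mem_insert_of_mem _ (Set.mem_insert_of_mem _ (Set.mem_insert _ _)))))))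
  have hg8 : (y12 ^ 2 * y16 + y20 ^ 2 + y12 * y2 ^ 11 * y3 ^ 2 : MvPolynomial (Fin 5) (ZMod 2)) ∈ J := Ideal.subset_span (Set.mem_insert_of_mem _ (Set.mem_insert_of_mem _ (Set.mem_insert_of_mem _ (Set.mem_insert_of_mem _ (Set.mem_insert_of_mem _ (Set.mem_insert_of_mem _ (Set.mem_insert_of_mem _ (Set.mem_insert _ _))))))))
  have hg9 : (y12 ^ 2 * y20 + y12 * y2 ^ 13 * y3 ^ 2 + y12 * y2 ^ 3 * y20 * y3 ^ 2 : MvPolynomial (Fin 5) (ZMod 2)) ∈ J := Ideal.subset_span (Set.mem_insert_of_mem _ (Set.mem_insert_of_mem _ (Set.mem_insert_of_mem _ (Set.mem_insert_of_mem _ (Set.mem_insert_of_mem _ (Set.mem_insert_of_mem _ (Set.mem_insert_of_mem _ (Set.mem_insert_of_mem _ (Set.mem_insert _ _)))))))))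
  have hg10 : (y12 * y16 ^ 2 + y12 * y2 ^ 13 * y3 ^ 2 : MvPolynomial (Fin 5) (ZMod 2)) ∈ J := Ideal.subset_span (Set.mem_insert_of_mem _ (Set.mem_insert_of_mem _ (Set.mem_insert_of_mem _ (Set.mem_insert_of_mem _ (Set.mem_insert_of_mem _ (Set.mem_insert_of_mem _ (Set.mem_insert_of_mem _ (Set.mem_insert_of_mem _ (Set.mem_insert_of_mem _ (Set.mem_insert _ _))))))))))
  have hg11 : (y16 ^ 3 + y12 * y16 * y20 + y12 * y2 ^ 5 * y20 * y3 ^ 2 : MvPolynomial (Fin 5) (ZMod 2)) ∈ J := Ideal.subset_span (Set.mem_insert_of_mem _ (Set.mem_insert_of_mem _ (Set.mem_insert_of_mem _ (Set.mem_insert_of_mem _ (Set.mem_insert_of_mem _ (Set.mem_insert_of_mem _ (Set.mem_insert_of_mem _ (Set.mem_insert_of_mem _ (Set.mem_insert_of_mem _ (Set.mem_insert_of_mem _ (Set.mem_insert _ _)))))))))))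
  have hg12 : (y16 ^ 2 * y20 + y2 ^ 13 * y20 * y3 ^ 2 : MvPolynomial (Fin 5) (ZMod 2)) ∈ J := Ideal.subset_span (Set.mem_insert_of_mem _ (Set.mem_insert_of_mem _ (Set.mem_insert_of_mem _ (Set.mem_insert_of_mem _ (Set.mem_insert_of_mem _ (Set.mem_insert_of_mem _ (Set.mem_insert_of_mem _ (Set.mem_insert_of_mem _ (Set.mem_insert_of_mem _ (Set.mem_insert_of_mem _ (Set.mem_insert_of_mem _ (Set.mem_singleton_iff.mpr rfl))))))))))))
  have h1 : y2 ^ 22 * y20 + 2 * (y2 ^ 19 * y3 ^ 2 * y20 + y2 ^ 14 * y16 * y20 + 2 * y2 ^ 13 * y3 ^ 2 * y12 * y20 + 2 * y2 ^ 11 * y3 ^ 2 * y16 * y20 + y2 ^ 9 * y3 ^ 2 * y12 ^ 2 * y16 + y2 ^ 8 * y12 * y16 * y20 + y2 ^ 7 * y3 ^ 2 * y12 ^ 2 * y20 + y2 ^ 6 * y12 ^ 3 * y16 + y2 ^ 6 * y16 ^ 2 * y20 + 2 * y2 ^ 5 * y3 ^ 2 * y12 * y16 * y20 + y2 ^ 2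 * y12 ^ 2 * y16 * y20 + y2 * y3 ^ 2 * y12 ^ 3 * y20 + y2 * y3 ^ 2 * y16 * y20 ^ 2 + y12 * y16 ^ 2 * y20) = (y2 ^ 13 * y20 + y2 ^ 7 * y12 * y20 + y2 ^ 5 * y16 * y20 + y2 * y12 ^ 2 * y20) * (y16 * y2 + y12 * y3 ^ 2 + y2 ^ 6 * y3 ^ 2) + (y2 ^ 11 * y3 * y20 + y2 ^ 9 * y3 * y12 ^ 2 + y2 * y3 * y20 ^ 2) * (y16 * y3) + (y2 ^ 5 * y12 * y16 + y2 * y16 * y20) * (y12 ^ 2 * y2 + y12 * y2 ^ 4 * y3 ^ 2 + y20 * y3 ^ 2) + (y2 * y3 * y12 * y20) * (y12 ^ 2 * y3) + (y2 ^ 8 * y20 + y16 * y20) * (y12 * y16 + y2 ^ 14 + y12 * y2 ^ 5 * y3 ^ 2 + y2 ^ 11 * y3 ^ 2) + (y2 ^ 6 * y16) * (y12 ^ 3 + y16 * y20 + y2 ^ 5 * y20 * y3 ^ 2) + (y12) * (y16 ^ 2 * y20 + y2 ^ 13 * y20 * y3 ^ 2) := by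
    simp only [y2, y3, y12, y16, y20]; ring
  have e1 : y2 ^ 22 * y20 = (y2 ^ 13 * y20 + y2 ^ 7 * y12 * y20 + y2 ^ 5 * y16 * y20 + y2 * y12 ^ 2 * y20) * (y16 * y2 + y12 * y3 ^ 2 + y2 ^ 6 * y3 ^ 2) + (y2 ^ 11 * y3 * y20 + y2 ^ 9 * y3 * y12 ^ 2 + y2 * y3 * y20 ^ 2) * (y16 * y3) + (y2 ^ 5 * y12 * y16 + y2 * y16 * y20) * (y12 ^ 2 * y2 + y12 * y2 ^ 4 * y3 ^ 2 + y20 * y3 ^ 2) + (y2 * y3 * y12 * y20) * (y12 ^ 2 * y3) + (y2 ^ 8 * y20 + y16 * y20) * (y12 * y16 + y2 ^ 14 + y12 * y2 ^ 5 * y3 ^ 2 + y2 ^ 11 * y3 ^ 2) + (y2 ^ 6 * y16) * (y12 ^ 3 + y16 * y20 + y2 ^ 5 * y20 * y3 ^ 2) + (y12) * (y16 ^ 2 * y20 + y2 ^ 13 * y20 * y3 ^ 2) := by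
    rw [← h1, two0]; ring
  have m1 : y2 ^ 22 * y20 ∈ J := e1 ▸ (J.add_mem (J.add_mem (J.add_mem (J.add_mem (J.add_mem (J.add_mem (J.mul_mem_left (y2 ^ 13 * y20 + y2 ^ 7 * y12 * y20 + y2 ^ 5 * y16 * y20 + y2 * y12 ^ 2 * y20) hg2) (J.mul_mem_left (y2 ^ 11 * y3 * y20 + y2 ^ 9 * y3 * y12 ^ 2 + y2 * y3 * y20 ^ 2) hg3)) (J.mul_mem_left (y2 ^ 5 * y12 * y16 + y2 * y16 * y20) hg4)) (J.mul_mem_left (y2 * y3 * y12 * y20) hg5)) (J.mul_mem_left (y2 ^ 8 * y20 + y16 * y20) hg6)) (J.mul_mem_left (y2 ^ 6 * y16) hg7)) (J.mul_mem_left (y12) hg12))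
  have e2 : y2 ^ 16 * y3 ^ 4 * y20 = (y2 ^ 16 * y3 * y20) * (y3 ^ 3) := by
    simp only [y2, y3, y12, y16, y20]; ring
  have m2 : y2 ^ 16 * y3 ^ 4 * y20 ∈ J := by rw [e2]; exact (J.mul_mem_left (y2 ^ 16 * y3 * y20) hg1)
  have e3 : y2 ^ 4 * y3 ^ 4 * y12 ^ 2 * y20 = (y2 ^ 4 * y3 * y12 ^ 2 * y20) * (y3 ^ 3) := by
    simp only [y2, y3, y12, y16, y20]; ring
  have m3 : y2 ^ 4 * y3 ^ 4 * y12 ^ 2 * y20 ∈ J := by rw [e3]; exact (J.mul_mem_left (y2 ^ 4 * y3 * y12 ^ 2 * y20) hg1)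
  have h4 : y2 ^ 6 * y12 * y20 ^ 2 + 2 * (y2 ^ 17 * y3 ^ 2 * y12 ^ 2 + y2 ^ 15 * y3 ^ 2 * y12 * y16 + y2 ^ 12 * y12 ^ 2 * y16 + y2 ^ 11 * y3 ^ 2 * y12 ^ 3 + y2 ^ 11 * y3 ^ 2 * y16 * y20 + y2 ^ 9 * y3 ^ 2 * y12 ^ 2 * y16 + y2 ^ 6 * y12 ^ 3 * y16 + y2 ^ 5 * y3 ^ 2 * y12 * y16 * y20) = (y2 ^ 11 * y12 ^ 2) * (y16 * y2 + y12 * y3 ^ 2 + y2 ^ 6 * y3 ^ 2) + (y2 ^ 15 * y3 * y12 + y2 ^ 11 * y3 * y20 + y2 ^ 9 * y3 * y12 ^ 2 + y2 ^ 5 * y3 * y12 * y20) * (y16 * y3) + (y2 ^ 11 * y16 + y2 ^ 5 * y12 * y16) * (y12 ^ 2 * y2 + y12 * y2 ^ 4 * y3 ^ 2 + y20 * y3 ^ 2) + (y2 ^ 11 * y3 * y12) * (y12 ^ 2 * y3) + (y2 ^ 6 * y12) * (y12 ^ 2 * y16 + y20 ^ 2 + y12 * y2 ^ 11 * y3 ^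 2) := by
    simp only [y2, y3, y12, y16, y20]; ring
  have e4 : y2 ^ 6 * y12 * y20 ^ 2 = (y2 ^ 11 * y12 ^ 2) * (y16 * y2 + y12 * y3 ^ 2 + y2 ^ 6 * y3 ^ 2) + (y2 ^ 15 * y3 * y12 + y2 ^ 11 * y3 * y20 + y2 ^ 9 * y3 * y12 ^ 2 + y2 ^ 5 * y3 * y12 * y20) * (y16 * y3) + (y2 ^ 11 * y16 + y2 ^ 5 * y12 * y16) * (y12 ^ 2 * y2 + y12 * y2 ^ 4 * y3 ^ 2 + y20 * y3 ^ 2) + (y2 ^ 11 * y3 * y12) * (y12 ^ 2 * y3) + (y2 ^ 6 * y12) * (y12 ^ 2 * y16 + y20 ^ 2 + y12 * y2 ^ 11 * y3 ^ 2) := by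
    rw [← h4, two0]; ring
  have m4 : y2 ^ 6 * y12 * y20 ^ 2 ∈ J := e4 ▸ (J.add_mem (J.add_mem (J.add_mem (J.add_mem (J.mul_mem_left (y2 ^ 11 * y12 ^ 2) hg2) (J.mul_mem_left (y2 ^ 15 * y3 * y12 + y2 ^ 11 * y3 * y20 + y2 ^ 9 * y3 * y12 ^ 2 + y2 ^ 5 * y3 * y12 * y20) hg3)) (J.mul_mem_left (y2 ^ 11 * y16 + y2 ^ 5 * y12 * y16) hg4)) (J.mul_mem_left (y2 ^ 11 * y3 * y12) hg5)) (J.mul_mem_left (y2 ^ 6 * y12) hg8))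
  exact ⟨m1, m2, m3, m4⟩
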